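/- Let μ̃_{t−1}, μ ∈ ℝ^d with μ̃_{t−1} ≠ μ, set Δ = (μ − μ̃_{t−1})/‖μ − μ̃_{t−1}‖ and η = 0.075. Suppose g ∈ ℝ^d satisfies ‖g‖ ≤ 1 and ⟨g, Δ⟩ > 0.1, and d_t > 0 satisfies 0.99‖μ̃_{t−1} − μ‖ ≤ d_t ≤ 1.15‖μ̃_{t−1} − μ‖. Define μ̃_t = μ̃_{t−1} + η·d_t·g. Then ‖μ̃_t − μ‖ ≤ 0.999·‖μ̃_{t−1} − μ‖. -/

import Mathlib

notation "⟪" x ", " y "⟫" => @inner ℝ _ _ x y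

/-- One step of the gradient-descent mean estimation procedure contracts the
distance to the true mean by a factor `0.999`. -/
theorem gradient_descent_step {d : ℕ}
    (μprev μ g : EuclideanSpace ℝ (Fin d)) (dt : ℝ)
    (hne : μprev ≠ μ)
    (hg : ‖g‖ ≤ 1)
    (hcorr : 0.1 < ⟪g, ‖μ - μprev‖⁻¹ • (μ - μprev)⟫)
    (hd0 : 0 < dt)
    (hdl : 0.99 * ‖μprev - μ‖ ≤ dt) (hdu : dt ≤ 1.15 * ‖μprev - μ‖) :
    ‖(μprev + (0.075 * dt) • g) - μ‖ ≤ 0.999 * ‖μprev - μ‖ := by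
  set r := ‖μprev - μ‖ with hrdef
  have hr : 0 < r := norm_pos_iff.mpr (sub_ne_zero.mpr hne)
  have hr' : ‖μ - μprev‖ = r := by rw [hrdef, norm_sub_rev]
  have hinner : 0.1 * r < ⟪g, μ - μprev⟫ := by
    rw [real_inner_smul_right, hr'] at hcorr
    have := (mul_lt_mul_iff_of_pos_right hr).mpr hcorr
    calc 0.1 * r < r⁻¹ * ⟪g, μ - μprev⟫ * r := this
      _ = ⟪g, μ - μprev⟫ := by field_simp
  have hkey : ‖(μprev + (0.075 * dt) • g) - μ‖ ^ 2
      = r ^ 2 + 2 * ((0.075 * dt) * ⟪μprev - μ, g⟫) + (0.075 * dt) ^ 2 * ‖g‖ ^ 2 := by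
    have h1 : (μprev + (0.075 * dt) • g) - μ = (μprev - μ) + (0.075 * dt) • g := by
      abel
    rw [h1, @norm_add_sq_real, real_inner_smul_right, norm_smul]
    ring_nf
    rw [Real.norm_eq_abs, sq_abs]
    ring
  have hip : ⟪μprev - μ, g⟫ = -⟪g, μ - μprev⟫ := by
    rw [real_inner_comm, show μprev - μ = -(μ - μprev) from by abel, inner_neg_right]
  have hg2 : ‖g‖ ^ 2 ≤ 1 := by
    have := norm_nonneg g
    nlinarith
  have hsq : ‖(μprev + (0.075 * dt) • g) - μ‖ ^ 2 ≤ (0.999 * r) ^ 2 := by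
    rw [hkey, hip]
    have h1 : (0.075 * dt) ^ 2 * ‖g‖ ^ 2 ≤ (0.075 * (1.15 * r)) ^ 2 := by
      have : (0.075 * dt) ^ 2 ≤ (0.075 * (1.15 * r)) ^ 2 := by nlinarith
      nlinarith [sq_nonneg (0.075 * dt), norm_nonneg g]
    nlinarith [mul_le_mul_of_nonneg_left hdl (by norm_num : (0:ℝ) ≤ 0.075),
      mul_lt_mul_of_pos_left hinner (by positivity : (0:ℝ) < 0.075 * dt)]
  have h999 : 0 ≤ 0.999 * r := by positivity
  nlinarith [norm_nonneg ((μprev + (0.075 * dt) • g) - μ)]
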